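/- For every line [l,m,n] of the subplane PG(2,q) (l,m,n ∈ GF(q), not all zero), the intersection of its extension with the line ℓ = [-ττ^q, τ+τ^q, -1] is the point E + θ E^q where E = (1,τ,τ^2) and θ = -(l+mτ+nτ^2)/(l+mτ+nτ^2)^q; in particular θ^{q^2+q+1} = -1, and distinct lines of PG(2,q) give distinct values of θ, so the splash of PG(2,q) onto ℓ is {E + θE^q : θ^{q^2+q+1} = -1}. -/

import Mathlib

open Matrix

/-- s(l,m,n) = l + mτ + nτ², the coordinate of the line [l,m,n] of PG(2,q). -/
def lineVal (k F : Type) [Field k] [Field F] [Algebra k F] (τ : F) (l m n : k) : F :=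
  algebraMap k F l + algebraMap k F m * τ + algebraMap k F n * τ ^ 2

/-- θ(l,m,n) = -s/s^q, the splash parameter of the line [l,m,n]. -/
noncomputable def splashParam (k F : Type) [Field k] [Field F] [Algebra k F]
    (q : ℕ) (τ : F) (l m n : k) : F :=
  -(lineVal k F τ l m n) / (lineVal k F τ l m n) ^ q

/-- The point E + θE^q of the line ℓ, where E = (1,τ,τ²). -/
noncomputable def splashPoint (F : Type) [Field F] (q : ℕ) (τ θ : F) : Fin 3 → F :=
  ![1, τ, τ ^ 2] + θ • ![1, τ ^ q, τ ^ (2 * q)]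

open Polynomial in
lemma my_indep {k F : Type} [Field k] [Field F] [Algebra k F] (τ : F)
    (hdeg : (minpoly k τ).natDegree = 3) (c0 c1 c2 : k)
    (h : algebraMap k F c0 + algebraMap k F c1 * τ + algebraMap k F c2 * τ ^ 2 = 0) :
    c0 = 0 ∧ c1 = 0 ∧ c2 = 0 := by
  set P : k[X] := C c0 + C c1 * X + C c2 * X ^ 2 with hP
  have haev : aeval τ P = 0 := by simp [hP, h]
  have hP0 : P = 0 := by
    by_contra hne
    have h1 := minpoly.degree_le_of_ne_zero k τ hne haev
    have h2 : P.degree ≤ 2 := by rw [hP]; compute_degree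
    have h3 : (minpoly k τ).degree = 3 := by
      rw [degree_eq_natDegree (fun h0 => by simp [h0] at hdeg), hdeg]; rfl
    rw [h3] at h1
    have := le_trans h1 h2
    norm_num at this
  refine ⟨?_, ?_, ?_⟩
  · have := congrArg (fun Q : k[X] => Q.coeff 0) hP0; simpa [hP] using this
  · have := congrArg (fun Q : k[X] => Q.coeff 1) hP0; simpa [hP] using this
  · have := congrArg (fun Q : k[X] => Q.coeff 2) hP0; simpa [hP] using this

open Polynomial in
lemma my_fixed {k F : Type} [Field k] [Field F] [Algebra k F] [Fintype k] [Fintype F]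
    {q : ℕ} (hq2 : 2 ≤ q) (hk : Fintype.card k = q) (x : F) (hx : x ^ q = x) :
    ∃ a : k, algebraMap k F a = x := by
  classical
  set P : F[X] := X ^ q - X with hP
  have hPne : P ≠ 0 := by
    intro h0
    have : P.coeff q = 0 := by rw [h0]; simp
    rw [hP] at this
    simp only [coeff_sub, coeff_X_pow, coeff_X] at this
    rw [if_neg (by omega : ¬ (1 = q))] at this
    simp at this
  have hdegP : P.natDegree ≤ q := by
    rw [hP]
    apply le_trans (natDegree_sub_le _ _)
    simp
    omega
  set T : Finset F := Finset.univ.filter (fun x : F => x ^ q = x) with hT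
  have hTsub : T ⊆ P.roots.toFinset := by
    intro y hy
    rw [Finset.mem_filter] at hy
    rw [Multiset.mem_toFinset, mem_roots hPne]
    simp [hP, IsRoot, hy.2, sub_eq_zero]
  have hTcard : T.card ≤ q :=
    le_trans (Finset.card_le_card hTsub)
      (le_trans (Multiset.toFinset_card_le _) (le_trans (card_roots' P) hdegP))
  have hIsub : Finset.univ.image (algebraMap k F) ⊆ T := by
    intro y hy
    rw [Finset.mem_image] at hy
    obtain ⟨a, -, rfl⟩ := hy
    rw [Finset.mem_filter]
    refine ⟨Finset.mem_univ _, ?_⟩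
    rw [← map_pow, ← hk, FiniteField.pow_card]
  have hIcard : (Finset.univ.image (algebraMap k F)).card = q := by
    rw [Finset.card_image_of_injective _ (algebraMap k F).injective, Finset.card_univ, hk]
  have hEq : Finset.univ.image (algebraMap k F) = T :=
    Finset.eq_of_subset_of_card_le hIsub (by omega)
  have hxT : x ∈ T := by rw [Finset.mem_filter]; exact ⟨Finset.mem_univ _, hx⟩
  rw [← hEq, Finset.mem_image] at hxT
  obtain ⟨a, -, ha⟩ := hxT
  exact ⟨a, ha⟩

lemma my_surj {k F : Type} [Field k] [Field F] [Algebra k F] [Fintype k] [Fintype F]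
    {q : ℕ} (hk : Fintype.card k = q) (hF : Fintype.card F = q ^ 3)
    (τ : F) (hdeg : (minpoly k τ).natDegree = 3) (s : F) :
    ∃ l m n : k, s = algebraMap k F l + algebraMap k F m * τ + algebraMap k F n * τ ^ 2 := by
  classical
  set f : (Fin 3 → k) → F := fun v =>
    algebraMap k F (v 0) + algebraMap k F (v 1) * τ + algebraMap k F (v 2) * τ ^ 2 with hf
  have hinj : Function.Injective f := by
    intro v w hvw
    have h0 : algebraMap k F (v 0 - w 0) + algebraMap k F (v 1 - w 1) * τ
        + algebraMap k F (v 2 - w 2) * τ ^ 2 = 0 := by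
      simp only [map_sub]
      simp only [hf] at hvw
      linear_combination hvw
    obtain ⟨h1, h2, h3⟩ := my_indep τ hdeg _ _ _ h0
    funext i
    fin_cases i
    · exact sub_eq_zero.mp h1
    · exact sub_eq_zero.mp h2
    · exact sub_eq_zero.mp h3
  have hcard : Fintype.card (Fin 3 → k) = Fintype.card F := by
    simp [Fintype.card_fun, hk, hF]
  have hbij := (Fintype.bijective_iff_injective_and_card f).mpr ⟨hinj, hcard⟩
  obtain ⟨v, hv⟩ := hbij.surjective s
  exact ⟨v 0, v 1, v 2, hv.symm⟩

lemma sp_eval {F : Type} [Field F] (q : ℕ) (τ θ : F) :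
    splashPoint F q τ θ 0 = 1 + θ * 1 ∧ splashPoint F q τ θ 1 = τ + θ * τ ^ q ∧
      splashPoint F q τ θ 2 = τ ^ 2 + θ * τ ^ (2 * q) := by
  refine ⟨?_, ?_, ?_⟩ <;> simp [splashPoint]

/-- each line [l,m,n] of PG(2,q) meets ℓ = [-ττ^q, τ+τ^q, -1] in the
point E + θE^q with θ = -(l+mτ+nτ²)/(l+mτ+nτ²)^q; moreover θ^{q²+q+1} = -1, distinct
lines give distinct θ, and every θ with θ^{q²+q+1} = -1 arises, so the splash of
PG(2,q) onto ℓ is {E + θE^q : θ^{q²+q+1} = -1}. -/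
theorem stmt11 (p n q : ℕ) (hp : p.Prime) (hn : 0 < n) (hq : q = p ^ n)
    (k F : Type) [Field k] [Field F] [Algebra k F] [Fintype k] [Fintype F]
    (hk : Fintype.card k = q) (hF : Fintype.card F = q ^ 3)
    (τ : F) (hdeg : (minpoly k τ).natDegree = 3) :
    (∀ l m n : k, ¬(l = 0 ∧ m = 0 ∧ n = 0) →
      -- the point E + θE^q lies on the extension of the line [l,m,n] of PG(2,q):
      (algebraMap k F l * splashPoint F q τ (splashParam k F q τ l m n) 0 +
       algebraMap k F m * splashPoint F q τ (splashParam k F q τ l m n) 1 +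
       algebraMap k F n * splashPoint F q τ (splashParam k F q τ l m n) 2 = 0) ∧
      -- it lies on ℓ = [-ττ^q, τ+τ^q, -1]:
      (-(τ * τ ^ q) * splashPoint F q τ (splashParam k F q τ l m n) 0 +
       (τ + τ ^ q) * splashPoint F q τ (splashParam k F q τ l m n) 1 -
       splashPoint F q τ (splashParam k F q τ l m n) 2 = 0) ∧
      -- its parameter satisfies θ^{q²+q+1} = -1:
      (splashParam k F q τ l m n) ^ (q ^ 2 + q + 1) = -1) ∧
    -- distinct lines of PG(2,q) give distinct parameters θ:
    (∀ l m n l' m' n' : k, ¬(l = 0 ∧ m = 0 ∧ n = 0) → ¬(l' = 0 ∧ m' = 0 ∧ n' = 0) →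
      splashParam k F q τ l m n = splashParam k F q τ l' m' n' →
      ∃ a : k, a ≠ 0 ∧ l' = a * l ∧ m' = a * m ∧ n' = a * n) ∧
    -- every θ with θ^{q²+q+1} = -1 is the parameter of some line of PG(2,q):
    (∀ θ : F, θ ^ (q ^ 2 + q + 1) = -1 →
      ∃ l m n : k, ¬(l = 0 ∧ m = 0 ∧ n = 0) ∧ θ = splashParam k F q τ l m n) := by
  classical
  haveI : Fact p.Prime := ⟨hp⟩
  have hq2 : 2 ≤ q := by
    rw [hq]
    calc 2 ≤ p := hp.two_le
    _ ≤ p ^ n := Nat.le_self_pow hn.ne' p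
  -- characteristic of F is p
  have hcharF : CharP F p := by
    obtain ⟨m, hr, hcard⟩ := FiniteField.card F (ringChar F)
    have h1 : ringChar F ∣ p ^ (3 * n) := by
      have : p ^ (3 * n) = Fintype.card F := by
        rw [hF, hq, ← pow_mul, mul_comm]
      rw [this, hcard]
      exact dvd_pow_self _ (by positivity)
    have h2 : ringChar F = p :=
      (Nat.prime_dvd_prime_iff_eq hr hp).mp (hr.dvd_of_dvd_pow h1)
    exact h2 ▸ ringChar.charP F
  haveI := hcharF
  have hadd : ∀ x y : F, (x + y) ^ q = x ^ q + y ^ q := by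
    intro x y; rw [hq]; exact add_pow_char_pow x y p n
  have halg : ∀ a : k, (algebraMap k F a) ^ q = algebraMap k F a := by
    intro a; rw [← map_pow, ← hk, FiniteField.pow_card]
  have hNodd : Odd (q ^ 2 + q + 1) := by
    have h1 : q ^ 2 + q + 1 = q * (q + 1) + 1 := by ring
    rw [h1]
    exact (Nat.even_mul_succ_self q).add_one
  -- basic facts about lineVal
  have hlv : ∀ l m n : k, lineVal k F τ l m n
      = algebraMap k F l + algebraMap k F m * τ + algebraMap k F n * τ ^ 2 := fun _ _ _ => rfl
  have hsne : ∀ l m n : k, ¬(l = 0 ∧ m = 0 ∧ n = 0) → lineVal k F τ l m n ≠ 0 := by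
    intro l m n hlmn h0
    exact hlmn (my_indep τ hdeg l m n (by rw [← hlv]; exact h0))
  have hsq : ∀ l m n : k, (lineVal k F τ l m n) ^ q
      = algebraMap k F l + algebraMap k F m * τ ^ q + algebraMap k F n * τ ^ (2 * q) := by
    intro l m n
    rw [hlv, hadd, hadd, mul_pow, mul_pow, halg, halg, halg, ← pow_mul]
  have hsN : ∀ l m n : k, (lineVal k F τ l m n) ^ (q * (q ^ 2 + q + 1))
      = (lineVal k F τ l m n) ^ (q ^ 2 + q + 1) := by
    intro l m n
    set s := lineVal k F τ l m n
    have h3 : q * (q ^ 2 + q + 1) = q ^ 3 + (q ^ 2 + q) := by ring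
    calc s ^ (q * (q ^ 2 + q + 1)) = s ^ (q ^ 3) * s ^ (q ^ 2 + q) := by rw [← pow_add, h3]
      _ = s * s ^ (q ^ 2 + q) := by rw [← hF, FiniteField.pow_card]
      _ = s ^ (q ^ 2 + q + 1) := by ring
  refine ⟨?_, ?_, ?_⟩
  · -- part (a)
    intro l m n hlmn
    set θ := splashParam k F q τ l m n with hθ
    set s := lineVal k F τ l m n with hsdef
    have hs0 : s ≠ 0 := hsne l m n hlmn
    have hsq0 : s ^ q ≠ 0 := pow_ne_zero _ hs0
    have key : s + θ * s ^ q = 0 := by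
      rw [hθ]
      simp only [splashParam, ← hsdef]
      field_simp
      ring
    obtain ⟨h0, h1, h2⟩ := sp_eval q τ θ
    refine ⟨?_, ?_, ?_⟩
    · rw [h0, h1, h2]
      linear_combination key - θ * hsq l m n - hlv l m n
    · rw [h0, h1, h2]
      ring
    · rw [hθ]
      simp only [splashParam, ← hsdef]
      rw [div_pow, ← pow_mul, hsN l m n, Odd.neg_pow hNodd, neg_div,
        div_self (pow_ne_zero _ hs0)]
  · -- part (b) : injectivity
    intro l m n l' m' n' hlmn hlmn' heq
    set s := lineVal k F τ l m n with hsdef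
    set s' := lineVal k F τ l' m' n' with hsdef'
    have hs0 : s ≠ 0 := hsne l m n hlmn
    have hs0' : s' ≠ 0 := hsne l' m' n' hlmn'
    have hsq0 : s ^ q ≠ 0 := pow_ne_zero _ hs0
    have hsq0' : s' ^ q ≠ 0 := pow_ne_zero _ hs0'
    simp only [splashParam, ← hsdef, ← hsdef'] at heq
    rw [div_eq_div_iff hsq0 hsq0'] at heq
    have hx : (s / s') ^ q = s / s' := by
      rw [div_pow, div_eq_div_iff hsq0' hs0']
      linear_combination heq
    obtain ⟨a, ha⟩ := my_fixed hq2 hk _ hx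
    have hane : a ≠ 0 := by
      intro h0
      rw [h0, map_zero] at ha
      exact div_ne_zero hs0 hs0' ha.symm
    have hsa : s = algebraMap k F a * s' := by
      rw [ha, div_mul_cancel₀ _ hs0']
    have h0 : algebraMap k F (l - a * l') + algebraMap k F (m - a * m') * τ
        + algebraMap k F (n - a * n') * τ ^ 2 = 0 := by
      simp only [map_sub, _root_.map_mul]
      linear_combination -(hlv l m n) + algebraMap k F a * hlv l' m' n' + hsa
    obtain ⟨e1, e2, e3⟩ := my_indep τ hdeg _ _ _ h0
    refine ⟨a⁻¹, inv_ne_zero hane, ?_, ?_, ?_⟩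
    · rw [sub_eq_zero.mp e1, inv_mul_cancel_left₀ hane]
    · rw [sub_eq_zero.mp e2, inv_mul_cancel_left₀ hane]
    · rw [sub_eq_zero.mp e3, inv_mul_cancel_left₀ hane]
  · -- part (c) : surjectivity
    intro θ hθN
    have hθne : θ ≠ 0 := by
      intro h0
      rw [h0, zero_pow (by positivity)] at hθN
      exact one_ne_zero (neg_eq_zero.mp hθN.symm)
    set c : F := -θ⁻¹ with hc
    have hcne : c ≠ 0 := by simp [hc, hθne]
    have hcN : c ^ (q ^ 2 + q + 1) = 1 := by
      rw [hc, Odd.neg_pow hNodd, inv_pow, hθN, inv_neg_one, neg_neg]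
    -- find s with s^(q-1) = c using cyclicity of Fˣ
    obtain ⟨g, hg⟩ := IsCyclic.exists_monoid_generator (α := Fˣ)
    have hgord : orderOf g = q ^ 3 - 1 := by
      have hmem : ∀ x : Fˣ, x ∈ Subgroup.zpowers g := by
        intro x
        obtain ⟨i, hi⟩ := hg x
        exact ⟨(i : ℤ), by simpa using hi⟩
      rw [orderOf_eq_card_of_forall_mem_zpowers hmem, Nat.card_eq_fintype_card,
        Fintype.card_units, hF]
    set cu : Fˣ := Units.mk0 c hcne with hcu
    obtain ⟨i, hi0⟩ := hg cu
    have hi : g ^ i = cu := hi0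
    have hcuN : cu ^ (q ^ 2 + q + 1) = 1 := by
      ext
      simpa [hcu] using hcN
    have hdvd : (q ^ 3 - 1) ∣ i * (q ^ 2 + q + 1) := by
      rw [← hgord]
      apply orderOf_dvd_of_pow_eq_one
      rw [pow_mul, hi, hcuN]
    have hfact : (q - 1) * (q ^ 2 + q + 1) = q ^ 3 - 1 := by
      rw [Nat.sub_mul, one_mul, (by ring : q * (q ^ 2 + q + 1) = q ^ 3 + q ^ 2 + q)]
      have h2 : ∀ A B C : ℕ, A + B + C - (B + C + 1) = A - 1 := fun A B C => by omega
      exact h2 _ _ _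
    have hNpos : 0 < q ^ 2 + q + 1 := by positivity
    have hdvd2 : (q - 1) ∣ i := by
      rw [← Nat.mul_dvd_mul_iff_right hNpos, hfact]
      exact hdvd
    obtain ⟨j, hj⟩ := hdvd2
    set s : F := ((g ^ j : Fˣ) : F) with hs
    have hsne0 : s ≠ 0 := Units.ne_zero _
    have hspow : s ^ (q - 1) = c := by
      have hu : (g ^ j) ^ (q - 1) = cu := by
        rw [← pow_mul, mul_comm, ← hj, hi]
      have := congrArg (Units.val) hu
      simpa [hs, hcu] using this
    obtain ⟨l, m, n, hlmn⟩ := my_surj hk hF τ hdeg s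
    have hlvs : lineVal k F τ l m n = s := (hlv l m n).trans hlmn.symm
    have hnz : ¬(l = 0 ∧ m = 0 ∧ n = 0) := by
      rintro ⟨rfl, rfl, rfl⟩
      apply hsne0
      rw [hlmn]
      simp
    refine ⟨l, m, n, hnz, ?_⟩
    have hsqeq : s ^ q = c * s := by
      rw [(by omega : q = (q - 1) + 1), pow_succ, hspow]
    rw [splashParam, hlvs, hsqeq, hc]
    field_simp
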